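/- Let ρ be a convex risk measure on X (a Banach space under the supremum norm) and let ξ ∈ X. For Ψ ∈ X define ρ_{∞,ξ}(Ψ) = inf_{γ>0} γ·(ρ(ξ + Ψ/γ) − ρ(ξ)), the limit as γ → ∞ of the non-increasing difference quotients. Then the subdifferential ∂ρ(ξ) is nonempty, and ρ_{∞,ξ} is the support function of ∂ρ(ξ): for every Ψ ∈ X, ρ_{∞,ξ}(Ψ) = sup{ q(−Ψ) : q ∈ ∂ρ(ξ) }, and this supremum is attained by some q ∈ ∂ρ(ξ). -/

import Mathlib

open BoundedContinuousFunction

/-- A (monetary) convex risk measure on the space `Ω →ᵇ ℝ` of bounded functions on `Ω`. -/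
def IsConvexRiskMeasure {Ω : Type*} [TopologicalSpace Ω] (ρ : (Ω →ᵇ ℝ) → ℝ) : Prop :=
  (∀ (Φ Ψ : Ω →ᵇ ℝ) (l : ℝ), 0 ≤ l → l ≤ 1 →
      ρ (l • Φ + (1 - l) • Ψ) ≤ l * ρ Φ + (1 - l) * ρ Ψ) ∧
  (∀ Φ Ψ : Ω →ᵇ ℝ, (∀ ω, Φ ω ≤ Ψ ω) → ρ Ψ ≤ ρ Φ) ∧
  (∀ (Φ : Ω →ᵇ ℝ) (m : ℝ), ρ (Φ + BoundedContinuousFunction.const Ω m) = ρ Φ - m)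

/-- The subdifferential of `ρ` at `ξ`: continuous linear functionals `q` with
`ρ(ξ + Y) ≥ ρ(ξ) + q(-Y)` for all `Y`. -/
def riskSubdiff {Ω : Type*} [TopologicalSpace Ω] (ρ : (Ω →ᵇ ℝ) → ℝ) (ξ : Ω →ᵇ ℝ) :
    Set ((Ω →ᵇ ℝ) →L[ℝ] ℝ) :=
  {q | ∀ Y : Ω →ᵇ ℝ, ρ ξ + q (-Y) ≤ ρ (ξ + Y)}

/-- The marginal risk measure of `ρ` centered at `ξ`:
`ρ_{∞,ξ}(Ψ) = inf_{γ > 0} γ (ρ(ξ + Ψ/γ) - ρ(ξ))`. -/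
noncomputable def marginalAt {Ω : Type*} [TopologicalSpace Ω]
    (ρ : (Ω →ᵇ ℝ) → ℝ) (ξ Ψ : Ω →ᵇ ℝ) : ℝ :=
  ⨅ γ : {g : ℝ // 0 < g}, (γ : ℝ) * (ρ (ξ + ((γ : ℝ))⁻¹ • Ψ) - ρ ξ)

namespace RiskAux

instance : Nonempty {g : ℝ // 0 < g} := ⟨⟨1, one_pos⟩⟩

variable {Ω : Type*} [TopologicalSpace Ω] {ρ : (Ω →ᵇ ℝ) → ℝ} {ξ : Ω →ᵇ ℝ}

/-- Upper Lipschitz bound: `ρ(ξ+Y) - ρ(ξ) ≤ ‖Y‖`. -/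
lemma f_le_norm (hρ : IsConvexRiskMeasure ρ) (Y : Ω →ᵇ ℝ) :
    ρ (ξ + Y) - ρ ξ ≤ ‖Y‖ := by
  obtain ⟨-, hmono, hcash⟩ := hρ
  have h1 : ρ (ξ + Y) ≤ ρ (ξ + const Ω (-‖Y‖)) := by
    apply hmono
    intro ω
    simp only [BoundedContinuousFunction.add_apply, BoundedContinuousFunction.const_apply]
    have := Y.norm_coe_le_norm ω
    rw [Real.norm_eq_abs, abs_le] at this
    linarith [this.1]
  rw [hcash ξ (-‖Y‖)] at h1
  linarith

/-- Lower Lipschitz bound: `-‖Y‖ ≤ ρ(ξ+Y) - ρ(ξ)`. -/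
lemma norm_le_f (hρ : IsConvexRiskMeasure ρ) (Y : Ω →ᵇ ℝ) :
    -‖Y‖ ≤ ρ (ξ + Y) - ρ ξ := by
  obtain ⟨-, hmono, hcash⟩ := hρ
  have h1 : ρ (ξ + const Ω ‖Y‖) ≤ ρ (ξ + Y) := by
    apply hmono
    intro ω
    simp only [BoundedContinuousFunction.add_apply, BoundedContinuousFunction.const_apply]
    have := Y.norm_coe_le_norm ω
    rw [Real.norm_eq_abs, abs_le] at this
    linarith [this.2]
  rw [hcash ξ ‖Y‖] at h1
  linarith

/-- Convexity of `Y ↦ ρ(ξ+Y) - ρ(ξ)`. -/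
lemma f_convex (hρ : IsConvexRiskMeasure ρ) (X Y : Ω →ᵇ ℝ) (l : ℝ) (h0 : 0 ≤ l) (h1 : l ≤ 1) :
    ρ (ξ + (l • X + (1 - l) • Y)) - ρ ξ ≤
      l * (ρ (ξ + X) - ρ ξ) + (1 - l) * (ρ (ξ + Y) - ρ ξ) := by
  have h := hρ.1 (ξ + X) (ξ + Y) l h0 h1
  have heq : l • (ξ + X) + (1 - l) • (ξ + Y) = ξ + (l • X + (1 - l) • Y) := by
    ext ω
    simp only [BoundedContinuousFunction.add_apply, BoundedContinuousFunction.coe_smul,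
      Pi.smul_apply, smul_eq_mul]
    ring
  rw [heq] at h
  calc ρ (ξ + (l • X + (1 - l) • Y)) - ρ ξ ≤ l * ρ (ξ + X) + (1 - l) * ρ (ξ + Y) - ρ ξ := by
        linarith
    _ = l * (ρ (ξ + X) - ρ ξ) + (1 - l) * (ρ (ξ + Y) - ρ ξ) := by ring

lemma bddBelow_aux (hρ : IsConvexRiskMeasure ρ) (Ψ : Ω →ᵇ ℝ) :
    BddBelow (Set.range fun γ : {g : ℝ // 0 < g} =>
      (γ : ℝ) * (ρ (ξ + ((γ : ℝ))⁻¹ • Ψ) - ρ ξ)) := by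
  refine ⟨-‖Ψ‖, ?_⟩
  rintro x ⟨γ, rfl⟩
  have h := norm_le_f (ξ := ξ) hρ (((γ : ℝ))⁻¹ • Ψ)
  have hγ : (0 : ℝ) < γ := γ.2
  have hn : ‖((γ : ℝ))⁻¹ • Ψ‖ = (γ : ℝ)⁻¹ * ‖Ψ‖ := by
    have h0 := norm_smul ((γ : ℝ))⁻¹ Ψ
    rwa [Real.norm_eq_abs, abs_of_pos (inv_pos.mpr hγ)] at h0
  have := mul_le_mul_of_nonneg_left h hγ.le
  rw [hn] at this
  have hval : (γ : ℝ) * -((γ : ℝ)⁻¹ * ‖Ψ‖) = -‖Ψ‖ := by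
    rw [mul_neg, ← mul_assoc, mul_inv_cancel₀ hγ.ne', one_mul]
  linarith [hval ▸ this]

lemma m_le (hρ : IsConvexRiskMeasure ρ) (Ψ : Ω →ᵇ ℝ) {γ : ℝ} (hγ : 0 < γ) :
    marginalAt ρ ξ Ψ ≤ γ * (ρ (ξ + γ⁻¹ • Ψ) - ρ ξ) :=
  ciInf_le (bddBelow_aux hρ Ψ) ⟨γ, hγ⟩

lemma le_m (hρ : IsConvexRiskMeasure ρ) (Ψ : Ω →ᵇ ℝ)
    (b : ℝ) (hb : ∀ γ : {g : ℝ // 0 < g}, b ≤ (γ : ℝ) * (ρ (ξ + ((γ : ℝ))⁻¹ • Ψ) - ρ ξ)) :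
    b ≤ marginalAt ρ ξ Ψ :=
  le_ciInf hb

lemma m_zero (hρ : IsConvexRiskMeasure ρ) : marginalAt ρ ξ (0 : Ω →ᵇ ℝ) = 0 := by
  unfold marginalAt
  have : ∀ γ : {g : ℝ // 0 < g},
      (γ : ℝ) * (ρ (ξ + ((γ : ℝ))⁻¹ • (0 : Ω →ᵇ ℝ)) - ρ ξ) = 0 := by
    intro γ
    rw [smul_zero, add_zero, sub_self, mul_zero]
  simp only [this]
  exact ciInf_const

lemma m_homog_le (hρ : IsConvexRiskMeasure ρ) {c : ℝ} (hc : 0 < c) (Ψ : Ω →ᵇ ℝ) :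
    marginalAt ρ ξ (c • Ψ) ≤ c * marginalAt ρ ξ Ψ := by
  have key : ∀ γ : {g : ℝ // 0 < g},
      c⁻¹ * marginalAt ρ ξ (c • Ψ) ≤ (γ : ℝ) * (ρ (ξ + ((γ : ℝ))⁻¹ • Ψ) - ρ ξ) := by
    intro γ
    have hγ : (0 : ℝ) < γ := γ.2
    have h := m_le (ξ := ξ) hρ (c • Ψ) (mul_pos hc hγ)
    have heq : (c * (γ : ℝ))⁻¹ • (c • Ψ) = ((γ : ℝ))⁻¹ • Ψ := by
      rw [smul_smul]
      congr 1
      field_simp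
    rw [heq] at h
    have h2 := mul_le_mul_of_nonneg_left h (inv_pos.mpr hc).le
    calc c⁻¹ * marginalAt ρ ξ (c • Ψ)
        ≤ c⁻¹ * (c * (γ : ℝ) * (ρ (ξ + ((γ : ℝ))⁻¹ • Ψ) - ρ ξ)) := h2
      _ = (γ : ℝ) * (ρ (ξ + ((γ : ℝ))⁻¹ • Ψ) - ρ ξ) := by
          rw [← mul_assoc, ← mul_assoc, inv_mul_cancel₀ hc.ne', one_mul]
  have h2 : c⁻¹ * marginalAt ρ ξ (c • Ψ) ≤ marginalAt ρ ξ Ψ := le_m hρ Ψ _ key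
  have h3 := mul_le_mul_of_nonneg_left h2 hc.le
  calc marginalAt ρ ξ (c • Ψ) = c * (c⁻¹ * marginalAt ρ ξ (c • Ψ)) := by field_simp
    _ ≤ c * marginalAt ρ ξ Ψ := h3

lemma m_homog (hρ : IsConvexRiskMeasure ρ) (c : ℝ) (hc : 0 < c) (Ψ : Ω →ᵇ ℝ) :
    marginalAt ρ ξ (c • Ψ) = c * marginalAt ρ ξ Ψ := by
  refine le_antisymm (m_homog_le hρ hc Ψ) ?_
  have h := m_homog_le (ξ := ξ) hρ (inv_pos.mpr hc) (c • Ψ)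
  rw [smul_smul, inv_mul_cancel₀ hc.ne', one_smul] at h
  have h2 := mul_le_mul_of_nonneg_left h hc.le
  calc c * marginalAt ρ ξ Ψ ≤ c * (c⁻¹ * marginalAt ρ ξ (c • Ψ)) := h2
    _ = marginalAt ρ ξ (c • Ψ) := by field_simp

lemma m_add (hρ : IsConvexRiskMeasure ρ) (A B : Ω →ᵇ ℝ) :
    marginalAt ρ ξ (A + B) ≤ marginalAt ρ ξ A + marginalAt ρ ξ B := by
  have key : ∀ γ δ : {g : ℝ // 0 < g},
      marginalAt ρ ξ (A + B) ≤
        (γ : ℝ) * (ρ (ξ + ((γ : ℝ))⁻¹ • A) - ρ ξ) +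
        (δ : ℝ) * (ρ (ξ + ((δ : ℝ))⁻¹ • B) - ρ ξ) := by
    intro γ δ
    have hγ : (0 : ℝ) < γ := γ.2
    have hδ : (0 : ℝ) < δ := δ.2
    have hγδ : (0 : ℝ) < (γ : ℝ) + δ := by linarith
    set l : ℝ := (γ : ℝ) / ((γ : ℝ) + δ) with hl
    have hl0 : 0 ≤ l := by positivity
    have hl1 : l ≤ 1 := by rw [hl, div_le_one hγδ]; linarith
    have h1ml : 1 - l = (δ : ℝ) / ((γ : ℝ) + δ) := by rw [hl]; field_simp; ring
    have h := m_le (ξ := ξ) hρ (A + B) hγδ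
    have heq : (((γ : ℝ) + δ))⁻¹ • (A + B) =
        l • (((γ : ℝ))⁻¹ • A) + (1 - l) • (((δ : ℝ))⁻¹ • B) := by
      rw [h1ml, smul_add, smul_smul, smul_smul]
      congr 2
      · rw [hl]; field_simp
      · field_simp
    rw [heq] at h
    have hconv := f_convex (ξ := ξ) hρ (((γ : ℝ))⁻¹ • A) (((δ : ℝ))⁻¹ • B) l hl0 hl1
    have h2 := mul_le_mul_of_nonneg_left hconv hγδ.le
    calc marginalAt ρ ξ (A + B)
        ≤ ((γ : ℝ) + δ) * (ρ (ξ + (l • (((γ : ℝ))⁻¹ • A) + (1 - l) • (((δ : ℝ))⁻¹ • B))) - ρ ξ) := h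
      _ ≤ ((γ : ℝ) + δ) * (l * (ρ (ξ + ((γ : ℝ))⁻¹ • A) - ρ ξ) +
            (1 - l) * (ρ (ξ + ((δ : ℝ))⁻¹ • B) - ρ ξ)) := h2
      _ = (γ : ℝ) * (ρ (ξ + ((γ : ℝ))⁻¹ • A) - ρ ξ) +
            (δ : ℝ) * (ρ (ξ + ((δ : ℝ))⁻¹ • B) - ρ ξ) := by
          rw [h1ml, hl]
          field_simp
  have h2 : ∀ γ : {g : ℝ // 0 < g},
      marginalAt ρ ξ (A + B) - marginalAt ρ ξ B ≤
        (γ : ℝ) * (ρ (ξ + ((γ : ℝ))⁻¹ • A) - ρ ξ) := by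
    intro γ
    have h3 : ∀ δ : {g : ℝ // 0 < g},
        marginalAt ρ ξ (A + B) - (γ : ℝ) * (ρ (ξ + ((γ : ℝ))⁻¹ • A) - ρ ξ) ≤
          (δ : ℝ) * (ρ (ξ + ((δ : ℝ))⁻¹ • B) - ρ ξ) := fun δ => by linarith [key γ δ]
    have h4 := le_m hρ B _ h3
    linarith
  have h5 := le_m hρ A _ h2
  linarith

end RiskAux

open RiskAux in
/-- The subdifferential `∂ρ(ξ)` of a convex risk measure is nonempty, and
`ρ_{∞,ξ}` is its support function: `ρ_{∞,ξ}(Ψ) = sup { q(-Ψ) : q ∈ ∂ρ(ξ) }`,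
the supremum being attained. -/
theorem stmt4 {Ω : Type*} [TopologicalSpace Ω] [DiscreteTopology Ω] [Nonempty Ω]
    (ρ : (Ω →ᵇ ℝ) → ℝ) (hρ : IsConvexRiskMeasure ρ) (ξ : Ω →ᵇ ℝ) :
    (riskSubdiff ρ ξ).Nonempty ∧
    ∀ Ψ : Ω →ᵇ ℝ,
      (∀ q ∈ riskSubdiff ρ ξ, q (-Ψ) ≤ marginalAt ρ ξ Ψ) ∧
      ∃ q ∈ riskSubdiff ρ ξ, marginalAt ρ ξ Ψ = q (-Ψ) := by
  set m := marginalAt ρ ξ with hm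
  have hm_zero : m (0 : Ω →ᵇ ℝ) = 0 := m_zero hρ
  have hm_homog : ∀ (c : ℝ), 0 < c → ∀ Ψ : Ω →ᵇ ℝ, m (c • Ψ) = c * m Ψ :=
    fun c hc Ψ => m_homog hρ c hc Ψ
  have hm_add : ∀ A B : Ω →ᵇ ℝ, m (A + B) ≤ m A + m B := fun A B => m_add hρ A B
  have hm_le_f : ∀ Y : Ω →ᵇ ℝ, m Y ≤ ρ (ξ + Y) - ρ ξ := by
    intro Y
    have h := m_le (ξ := ξ) hρ Y one_pos
    rw [inv_one, one_smul, one_mul] at h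
    exact h
  -- main attainment statement
  have main : ∀ Ψ : Ω →ᵇ ℝ, ∃ q ∈ riskSubdiff ρ ξ, m Ψ = q (-Ψ) := by
    intro Ψ
    obtain ⟨x₀, hx₀, hval⟩ : ∃ x₀ : Ω →ᵇ ℝ, x₀ ≠ 0 ∧ (Ψ = x₀ ∨ Ψ = 0) := by
      by_cases h : Ψ = 0
      · refine ⟨const Ω 1, ?_, Or.inr h⟩
        intro h0
        have := DFunLike.congr_fun h0 (Classical.arbitrary Ω)
        simp at this
      · exact ⟨Ψ, h, Or.inl rfl⟩
    set f0 := LinearPMap.mkSpanSingleton (K := ℝ) (σ := RingHom.id ℝ) x₀ (m x₀) hx₀ with hf0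
    have hf : ∀ x : f0.domain, f0 x ≤ m x := by
      rintro ⟨y, hy⟩
      have hy' : ∃ c : ℝ, c • x₀ = y := Submodule.mem_span_singleton.mp hy
      obtain ⟨c, rfl⟩ := hy'
      have happ : f0 ⟨c • x₀, hy⟩ = c • m x₀ := LinearPMap.mkSpanSingleton'_apply x₀ (m x₀) _ c hy
      rw [happ]
      show c • m x₀ ≤ m (c • x₀)
      rcases lt_trichotomy c 0 with hc | hc | hc
      · have hnc : 0 < -c := by linarith
        have h1 : m ((-c) • x₀) = (-c) * m x₀ := hm_homog (-c) hnc x₀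
        have h2 : m (c • x₀ + (-c) • x₀) ≤ m (c • x₀) + m ((-c) • x₀) := hm_add _ _
        have h3 : c • x₀ + (-c) • x₀ = (0 : Ω →ᵇ ℝ) := by
          rw [← add_smul]; simp
        rw [h3, hm_zero, h1] at h2
        simp only [smul_eq_mul]
        linarith
      · subst hc
        simp only [zero_smul, smul_eq_mul, zero_mul]
        rw [hm_zero]
      · rw [hm_homog c hc x₀]
        simp [smul_eq_mul]
    obtain ⟨g, hg_eq, hg_le⟩ :=
      exists_extension_of_le_sublinear f0 m (fun c hc x => hm_homog c hc x)
        (fun x y => hm_add x y) hf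
    have hm_le_norm : ∀ Y : Ω →ᵇ ℝ, m Y ≤ ‖Y‖ :=
      fun Y => (hm_le_f Y).trans (f_le_norm hρ Y)
    have hbound : ∀ Y : Ω →ᵇ ℝ, ‖g Y‖ ≤ 1 * ‖Y‖ := by
      intro Y
      rw [one_mul, Real.norm_eq_abs, abs_le]
      constructor
      · have h1 := (hg_le (-Y)).trans (hm_le_norm (-Y))
        rw [map_neg, norm_neg] at h1
        linarith
      · exact (hg_le Y).trans (hm_le_norm Y)
    set G : (Ω →ᵇ ℝ) →L[ℝ] ℝ := LinearMap.mkContinuous g 1 hbound with hG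
    have hGapp : ∀ Y : Ω →ᵇ ℝ, G Y = g Y := fun Y => rfl
    refine ⟨-G, ?_, ?_⟩
    · intro Y
      have h1 : g Y ≤ ρ (ξ + Y) - ρ ξ := (hg_le Y).trans (hm_le_f Y)
      have h2 : (-G) (-Y) = g Y := by
        rw [ContinuousLinearMap.neg_apply, hGapp, map_neg, neg_neg]
      rw [h2]
      linarith
    · have h2 : (-G) (-Ψ) = g Ψ := by
        rw [ContinuousLinearMap.neg_apply, hGapp, map_neg, neg_neg]
      rw [h2]
      rcases hval with rfl | rfl
      · have h3 := hg_eq ⟨Ψ, Submodule.mem_span_singleton_self Ψ⟩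
        rw [LinearPMap.mkSpanSingleton_apply] at h3
        exact h3.symm
      · rw [map_zero, hm_zero]
  refine ⟨?_, fun Ψ => ⟨?_, main Ψ⟩⟩
  · obtain ⟨q, hq, -⟩ := main 0
    exact ⟨q, hq⟩
  · intro q hq
    refine le_m hρ Ψ _ ?_
    intro γ
    have hγ : (0 : ℝ) < γ := γ.2
    have h := hq (((γ : ℝ))⁻¹ • Ψ)
    have h2 : q (-(((γ : ℝ))⁻¹ • Ψ)) = (γ : ℝ)⁻¹ * q (-Ψ) := by
      rw [show -(((γ : ℝ))⁻¹ • Ψ) = ((γ : ℝ))⁻¹ • (-Ψ) from (smul_neg _ Ψ).symm,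
        map_smul, smul_eq_mul]
    rw [h2] at h
    have h3 : (γ : ℝ)⁻¹ * q (-Ψ) ≤ ρ (ξ + ((γ : ℝ))⁻¹ • Ψ) - ρ ξ := by linarith
    have h4 := mul_le_mul_of_nonneg_left h3 hγ.le
    calc q (-Ψ) = (γ : ℝ) * ((γ : ℝ)⁻¹ * q (-Ψ)) := by
          rw [← mul_assoc, mul_inv_cancel₀ hγ.ne', one_mul]
      _ ≤ (γ : ℝ) * (ρ (ξ + ((γ : ℝ))⁻¹ • Ψ) - ρ ξ) := h4
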